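/- Let 0 < κ < 1 and Q_ρ(x) ⊆ Q_s(x) be concentric cubes with 0 < ρ ≤ s. Let f be measurable with finite κ-averages, and let q_ρ, q_s be minimizers of q ↦ (⨍_{Q_ρ(x)} |f − q|^κ)^{1/κ} and q ↦ (⨍_{Q_s(x)} |f − q|^κ)^{1/κ}, respectively. Then |q_ρ − q_s| ≤ C(κ) · (s/ρ)^{n/κ} · (⨍_{Q_s(x)} |f − q_s|^κ dy)^{1/κ} for a constant C(κ) depending only on κ. -/

import Mathlib

open MeasureTheory

/-- The open cube `x + (-t,t)^n` in `ℝⁿ`. -/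
def cube (n : ℕ) (x : Fin n → ℝ) (t : ℝ) : Set (Fin n → ℝ) :=
  {y | ∀ i, |y i - x i| < t}

lemma cube_eq (n : ℕ) (x : Fin n → ℝ) (t : ℝ) :
    cube n x t = Set.univ.pi fun i => Set.Ioo (x i - t) (x i + t) := by
  ext y
  simp only [cube, Set.mem_setOf_eq, Set.mem_pi, Set.mem_univ, forall_true_left,
    Set.mem_Ioo]
  constructor
  · intro h i
    have := abs_lt.mp (h i)
    constructor <;> linarith [this.1, this.2]
  · intro h i
    rw [abs_lt]
    constructor <;> linarith [(h i).1, (h i).2]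

lemma volume_cube (n : ℕ) (x : Fin n → ℝ) (t : ℝ) :
    volume (cube n x t) = ENNReal.ofReal (2 * t) ^ n := by
  rw [cube_eq, volume_pi_pi]
  have : ∀ i : Fin n, volume (Set.Ioo (x i - t) (x i + t)) = ENNReal.ofReal (2 * t) := by
    intro i
    rw [Real.volume_Ioo]
    ring_nf
  simp [this]

lemma rpow_add_le_add_rpow_real {a b p : ℝ} (ha : 0 ≤ a) (hb : 0 ≤ b)
    (hp0 : 0 ≤ p) (hp1 : p ≤ 1) : (a + b) ^ p ≤ a ^ p + b ^ p := by
  have h := NNReal.rpow_add_le_add_rpow a.toNNReal b.toNNReal hp0 hp1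
  rw [← Real.toNNReal_add ha hb] at h
  have h2 := NNReal.coe_le_coe.mpr h
  rwa [NNReal.coe_add, NNReal.coe_rpow, NNReal.coe_rpow, NNReal.coe_rpow,
    Real.coe_toNNReal _ (add_nonneg ha hb), Real.coe_toNNReal _ ha,
    Real.coe_toNNReal _ hb] at h2

theorem stmt7 (κ : ℝ) (hκ0 : 0 < κ) (hκ1 : κ < 1) :
    ∃ C > 0, ∀ (n : ℕ) (x : Fin n → ℝ) (ρ s : ℝ), 0 < ρ → ρ ≤ s →
      ∀ (f : (Fin n → ℝ) → ℝ),
        (∀ q : ℝ, IntegrableOn (fun y => |f y - q| ^ κ) (cube n x s)) →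
        ∀ qρ qs : ℝ,
          (∀ q : ℝ, (⨍ y in cube n x ρ, |f y - qρ| ^ κ) ^ (1 / κ) ≤
            (⨍ y in cube n x ρ, |f y - q| ^ κ) ^ (1 / κ)) →
          (∀ q : ℝ, (⨍ y in cube n x s, |f y - qs| ^ κ) ^ (1 / κ) ≤
            (⨍ y in cube n x s, |f y - q| ^ κ) ^ (1 / κ)) →
          |qρ - qs| ≤ C * (s / ρ) ^ ((n : ℝ) / κ) *
            (⨍ y in cube n x s, |f y - qs| ^ κ) ^ (1 / κ) := by
  refine ⟨(2 : ℝ) ^ (1 / κ), Real.rpow_pos_of_pos two_pos _, ?_⟩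
  intro n x ρ s hρ hρs f hint qρ qs hqρ hqs
  have hs : 0 < s := lt_of_lt_of_le hρ hρs
  set R := cube n x ρ with hR
  set S := cube n x s with hS
  have hsub : R ⊆ S := fun y hy i => lt_of_lt_of_le (hy i) hρs
  -- volumes
  have hvρ0 : (0:ℝ) < 2 * ρ := by linarith
  have hvs0 : (0:ℝ) < 2 * s := by linarith
  have hvR : (volume R).toReal = (2 * ρ) ^ n := by
    rw [hR, volume_cube, ENNReal.toReal_pow, ENNReal.toReal_ofReal hvρ0.le]
  have hvS : (volume S).toReal = (2 * s) ^ n := by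
    rw [hS, volume_cube, ENNReal.toReal_pow, ENNReal.toReal_ofReal hvs0.le]
  have hvRpos : (0:ℝ) < (2 * ρ) ^ n := pow_pos hvρ0 n
  have hvSpos : (0:ℝ) < (2 * s) ^ n := pow_pos hvs0 n
  have hRfin : volume R ≠ ⊤ := by
    rw [hR, volume_cube]; exact ENNReal.pow_ne_top ENNReal.ofReal_ne_top
  -- integrability and nonnegativity
  have hintR : ∀ q : ℝ, IntegrableOn (fun y => |f y - q| ^ κ) R :=
    fun q => (hint q).mono_set hsub
  have hnn : ∀ (q : ℝ) (y : Fin n → ℝ), (0:ℝ) ≤ |f y - q| ^ κ :=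
    fun q y => Real.rpow_nonneg (abs_nonneg _) κ
  -- averages as integrals
  have havgR : ∀ q : ℝ, (⨍ y in R, |f y - q| ^ κ) =
      ((2 * ρ) ^ n)⁻¹ * ∫ y in R, |f y - q| ^ κ := by
    intro q
    rw [setAverage_eq, measureReal_def, hvR, smul_eq_mul]
  have havgS : ∀ q : ℝ, (⨍ y in S, |f y - q| ^ κ) =
      ((2 * s) ^ n)⁻¹ * ∫ y in S, |f y - q| ^ κ := by
    intro q
    rw [setAverage_eq, measureReal_def, hvS, smul_eq_mul]
  have hInn : ∀ q : ℝ, (0:ℝ) ≤ ∫ y in R, |f y - q| ^ κ :=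
    fun q => integral_nonneg (fun y => hnn q y)
  have hInnS : ∀ q : ℝ, (0:ℝ) ≤ ∫ y in S, |f y - q| ^ κ :=
    fun q => integral_nonneg (fun y => hnn q y)
  -- minimality of qρ, in integral form
  have hmin : (∫ y in R, |f y - qρ| ^ κ) ≤ ∫ y in R, |f y - qs| ^ κ := by
    have h := hqρ qs
    rw [Real.rpow_le_rpow_iff (by rw [havgR]; positivity) (by rw [havgR]; positivity)
      (by positivity)] at h
    rw [havgR, havgR] at h
    exact le_of_mul_le_mul_left (by simpa [mul_comm] using h) (inv_pos.mpr hvRpos)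
  -- monotonicity of integral in the set
  have hmono : (∫ y in R, |f y - qs| ^ κ) ≤ ∫ y in S, |f y - qs| ^ κ :=
    setIntegral_mono_set (hint qs) (Filter.Eventually.of_forall (fun y => hnn qs y))
      (Filter.Eventually.of_forall hsub)
  -- pointwise bound and constant integral
  have hpt : ∀ y, |qρ - qs| ^ κ ≤ |f y - qρ| ^ κ + |f y - qs| ^ κ := by
    intro y
    have h1 : |qρ - qs| ≤ |f y - qρ| + |f y - qs| := by
      have : qρ - qs = -(f y - qρ) + (f y - qs) := by ring
      rw [this]
      exact (abs_add_le _ _).trans (by rw [abs_neg])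
    calc |qρ - qs| ^ κ ≤ (|f y - qρ| + |f y - qs|) ^ κ :=
          Real.rpow_le_rpow (abs_nonneg _) h1 hκ0.le
      _ ≤ |f y - qρ| ^ κ + |f y - qs| ^ κ :=
          rpow_add_le_add_rpow_real (abs_nonneg _) (abs_nonneg _) hκ0.le hκ1.le
  have hconst : |qρ - qs| ^ κ * (2 * ρ) ^ n ≤
      (∫ y in R, |f y - qρ| ^ κ) + ∫ y in R, |f y - qs| ^ κ := by
    have h1 : (∫ _ in R, |qρ - qs| ^ κ) ≤
        ∫ y in R, (|f y - qρ| ^ κ + |f y - qs| ^ κ) :=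
      setIntegral_mono (integrableOn_const hRfin)
        ((hintR qρ).add (hintR qs)) (fun y => hpt y)
    rw [setIntegral_const, smul_eq_mul, measureReal_def, hvR,
      integral_add (hintR qρ) (hintR qs)] at h1
    linarith [h1]
  -- key bound on |qρ - qs| ^ κ
  set A : ℝ := ⨍ y in S, |f y - qs| ^ κ with hA
  have hAnn : 0 ≤ A := by rw [hA, havgS]; positivity
  have hkey : |qρ - qs| ^ κ ≤ 2 * (s / ρ) ^ ((n:ℕ) : ℝ) * A := by
    have h2 : |qρ - qs| ^ κ * (2 * ρ) ^ n ≤ 2 * ∫ y in S, |f y - qs| ^ κ := by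
      calc |qρ - qs| ^ κ * (2 * ρ) ^ n ≤
          (∫ y in R, |f y - qρ| ^ κ) + ∫ y in R, |f y - qs| ^ κ := hconst
        _ ≤ 2 * ∫ y in R, |f y - qs| ^ κ := by linarith [hmin]
        _ ≤ 2 * ∫ y in S, |f y - qs| ^ κ := by linarith [hmono]
    have hAint : (∫ y in S, |f y - qs| ^ κ) = (2 * s) ^ n * A := by
      rw [hA, havgS]; field_simp
    rw [hAint] at h2
    have hratio : ((2 * s) ^ n : ℝ) / (2 * ρ) ^ n = (s / ρ) ^ ((n:ℕ) : ℝ) := by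
      rw [Real.rpow_natCast, ← div_pow]
      congr 1
      field_simp
    calc |qρ - qs| ^ κ = |qρ - qs| ^ κ * (2 * ρ) ^ n / (2 * ρ) ^ n := by
          field_simp
      _ ≤ 2 * ((2 * s) ^ n * A) / (2 * ρ) ^ n := by gcongr
      _ = 2 * (s / ρ) ^ ((n:ℕ) : ℝ) * A := by
          rw [← hratio]; field_simp
  -- conclude by taking 1/κ powers
  have hsρ : (0:ℝ) ≤ s / ρ := div_nonneg hs.le hρ.le
  have hrp : (0:ℝ) ≤ (s / ρ) ^ ((n:ℕ) : ℝ) := Real.rpow_nonneg hsρ _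
  have habs : |qρ - qs| = (|qρ - qs| ^ κ) ^ (1 / κ) := by
    rw [← Real.rpow_mul (abs_nonneg _), mul_one_div_cancel hκ0.ne', Real.rpow_one]
  rw [habs]
  calc (|qρ - qs| ^ κ) ^ (1 / κ) ≤ (2 * (s / ρ) ^ ((n:ℕ) : ℝ) * A) ^ (1 / κ) :=
        Real.rpow_le_rpow (Real.rpow_nonneg (abs_nonneg _) _) hkey (by positivity)
    _ = (2:ℝ) ^ (1 / κ) * (s / ρ) ^ ((n : ℝ) / κ) * A ^ (1 / κ) := by
        rw [Real.mul_rpow (by positivity) hAnn, Real.mul_rpow (by norm_num) hrp,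
          ← Real.rpow_mul hsρ]
        congr 2
        field_simp
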